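/- If the reservation quotas are a smart reserve, then μ^JSA weakly dominates μ^BASE for disadvantaged students: μ^JSA(s) ≥_s μ^BASE(s) for every disadvantaged student s ∈ S^m. -/
import Mathlib


/-!
Common formalization of school-choice instances with reserved seats
(minority reserve, joint seat allocation, discovery program).

Conventions:
* `prio c s` is the priority rank of student `s` at school `c`
  (smaller value = higher priority); injectivity encodes a strict priority order.
* `pref s o` is the preference rank of outcome `o : Option C` for student `s`
  (smaller value = more preferred); `none` denotes being unmatched, and a school
  `c` is acceptable to `s` iff `pref s (some c) < pref s none`.
-/

open Finset

structure SchoolChoice (S C : Type*) [Fintype S] [DecidableEq S] [Fintype C] [DecidableEq C] where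
  /-- the set of disadvantaged (minority) students; the rest are advantaged -/
  dis : Finset S
  /-- preference rank of each outcome (school or `none` = unmatched) for each student -/
  pref : S → Option C → ℕ
  pref_inj : ∀ s, Function.Injective (pref s)
  /-- priority rank of each student at each school (lower = higher priority) -/
  prio : C → S → ℕ
  prio_inj : ∀ c, Function.Injective (prio c)
  /-- quota of each school -/
  q : C → ℕ
  /-- reservation quota of each school -/
  qR : C → ℕ
  qR_le : ∀ c, qR c ≤ q c

namespace SchoolChoice

variable {S C : Type*} [Fintype S] [DecidableEq S] [Fintype C] [DecidableEq C]

/-- `max(T, >_c, k)`: the `min(k, |T|)` highest-priority students of `T` at school `c`. -/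
def maxSet (I : SchoolChoice S C) (c : C) (T : Finset S) (k : ℕ) : Finset S :=
  T.filter fun s => (T.filter fun t => I.prio c t < I.prio c s).card < k

/-- baseline choice function `C^BASE_c` -/
def CBASE (I : SchoolChoice S C) (c : C) (T : Finset S) : Finset S :=
  I.maxSet c T (I.q c)

/-- `S1^R` of the minority-reserve choice function -/
def mrRes (I : SchoolChoice S C) (c : C) (T : Finset S) : Finset S :=
  I.maxSet c (T ∩ I.dis) (I.qR c)

/-- minority-reserve choice function `C^MR_c` -/
def CMR (I : SchoolChoice S C) (c : C) (T : Finset S) : Finset S :=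
  I.mrRes c T ∪ I.maxSet c (T \ I.mrRes c T) (I.q c - (I.mrRes c T).card)

/-- `S1^G` of the joint-seat-allocation choice function -/
def jsaGen (I : SchoolChoice S C) (c : C) (T : Finset S) : Finset S :=
  I.maxSet c T (I.q c - I.qR c)

/-- `S1^R` of the joint-seat-allocation choice function -/
def jsaRes (I : SchoolChoice S C) (c : C) (T : Finset S) : Finset S :=
  I.maxSet c ((T ∩ I.dis) \ I.jsaGen c T) (I.qR c)

/-- joint-seat-allocation choice function `C^JSA_c` -/
def CJSA (I : SchoolChoice S C) (c : C) (T : Finset S) : Finset S :=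
  I.jsaGen c T ∪ I.jsaRes c T ∪
    I.maxSet c (T \ (I.jsaGen c T ∪ I.jsaRes c T))
      (I.q c - (I.jsaGen c T ∪ I.jsaRes c T).card)

/-- school `c` is acceptable to student `s` -/
def acceptable (I : SchoolChoice S C) (s : S) (c : C) : Prop :=
  I.pref s (some c) < I.pref s none

/-- `μ(c)`: the set of students assigned to school `c` by `μ` -/
def assigned (I : SchoolChoice S C) (μ : S → Option C) (c : C) : Finset S :=
  Finset.univ.filter fun s => μ s = some c

/-- `μ` is a matching: students are assigned only acceptable schools, quotas respected -/
def IsMatching (I : SchoolChoice S C) (μ : S → Option C) : Prop :=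
  (∀ s c, μ s = some c → I.acceptable s c) ∧ ∀ c, (I.assigned μ c).card ≤ I.q c

/-- `μ` is stable w.r.t. the choice functions `Ch`: it is a matching and no pair
`(s, c)` with `c` acceptable to `s` satisfies `c >_s μ(s)` and `s ∈ Ch c (μ(c) ∪ {s})`. -/
def IsStable (I : SchoolChoice S C) (Ch : C → Finset S → Finset S) (μ : S → Option C) : Prop :=
  I.IsMatching μ ∧
    ∀ s c, I.acceptable s c → I.pref s (some c) < I.pref s (μ s) →
      s ∉ Ch c (insert s (I.assigned μ c))

/-- `μ` is the student-optimal stable matching w.r.t. `Ch`: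
stable and weakly preferred by every student to every stable matching. -/
def IsOptStable (I : SchoolChoice S C) (Ch : C → Finset S → Finset S) (μ : S → Option C) :
    Prop :=
  I.IsStable Ch μ ∧ ∀ μ', I.IsStable Ch μ' → ∀ s, I.pref s (μ s) ≤ I.pref s (μ' s)

/-! Restricted (sub)instances, used by the three-stage discovery program: only students
in `A` participate and school `c` has quota `q' c`, with baseline (responsive) choice
functions. -/

def IsMatchingOn (I : SchoolChoice S C) (A : Finset S) (q' : C → ℕ) (μ : S → Option C) :
    Prop :=
  (∀ s, s ∉ A → μ s = none) ∧
    (∀ s c, μ s = some c → I.acceptable s c) ∧ ∀ c, (I.assigned μ c).card ≤ q' c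

def IsStableOn (I : SchoolChoice S C) (A : Finset S) (q' : C → ℕ) (μ : S → Option C) : Prop :=
  I.IsMatchingOn A q' μ ∧
    ∀ s ∈ A, ∀ c : C, I.acceptable s c → I.pref s (some c) < I.pref s (μ s) →
      s ∉ I.maxSet c (insert s (I.assigned μ c)) (q' c)

def IsOptStableOn (I : SchoolChoice S C) (A : Finset S) (q' : C → ℕ) (μ : S → Option C) :
    Prop :=
  I.IsStableOn A q' μ ∧
    ∀ μ', I.IsStableOn A q' μ' → ∀ s ∈ A, I.pref s (μ s) ≤ I.pref s (μ' s)

/-- `μ` is the discovery-program matching: the union of the three stage matchings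
`μ1` (general seats, all students), `μ2` (reserved seats, unmatched disadvantaged
students), `μ3` (vacant reserved seats, unmatched advantaged students). -/
def IsDisc (I : SchoolChoice S C) (μ : S → Option C) : Prop :=
  ∃ μ1 μ2 μ3 : S → Option C,
    I.IsOptStableOn Finset.univ (fun c => I.q c - I.qR c) μ1 ∧
    I.IsOptStableOn (I.dis.filter fun s => μ1 s = none) I.qR μ2 ∧
    I.IsOptStableOn ((Finset.univ \ I.dis).filter fun s => μ1 s = none)
      (fun c => I.qR c - (I.assigned μ2 c).card) μ3 ∧
    ∀ s, μ s = Option.elim (μ1 s) (Option.elim (μ2 s) (μ3 s) some) some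

/-- `(s, c)` is a blocking pair of `μ` for disadvantaged students -/
def BlockDis (I : SchoolChoice S C) (μ : S → Option C) (s : S) (c : C) : Prop :=
  s ∈ I.dis ∧ I.acceptable s c ∧ I.pref s (some c) < I.pref s (μ s) ∧
    ∃ s' ∈ I.assigned μ c, s' ∈ I.dis ∧ I.prio c s < I.prio c s'

/-- `(s, c)` is a blocking pair of `μ` for advantaged students -/
def BlockAdv (I : SchoolChoice S C) (μ : S → Option C) (s : S) (c : C) : Prop :=
  s ∉ I.dis ∧ I.acceptable s c ∧ I.pref s (some c) < I.pref s (μ s) ∧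
    ∃ s' ∈ I.assigned μ c, s' ∉ I.dis ∧ I.prio c s < I.prio c s'

/-- `(s, c)` is an in-group blocking pair of `μ` -/
def InGroupBlock (I : SchoolChoice S C) (μ : S → Option C) (s : S) (c : C) : Prop :=
  I.BlockDis μ s c ∨ I.BlockAdv μ s c

/-- all schools share a common priority order over the students -/
def CommonPriority (I : SchoolChoice S C) : Prop :=
  ∀ c c' : C, ∀ t u : S, I.prio c t < I.prio c u ↔ I.prio c' t < I.prio c' u

/-- the reservation quotas are a smart reserve w.r.t. the baseline matching `μBase` -/
def SmartReserve (I : SchoolChoice S C) (μBase : S → Option C) : Prop :=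
  ∀ c, (I.assigned μBase c ∩ I.dis).card ≤ I.qR c

end SchoolChoice

/-! ### Auxiliary development: deferred acceptance under `C^JSA` -/

namespace SchoolChoice

variable {S C : Type*} [Fintype S] [DecidableEq S] [Fintype C] [DecidableEq C]

section Aux


variable (I : SchoolChoice S C) (c : C)

def hsetJ (T : Finset S) (s : S) : Finset S := T.filter fun v => I.prio c v < I.prio c s

def cntJ (T : Finset S) (s : S) : ℕ := (hsetJ I c T s).card

lemma mem_hsetJ {T : Finset S} {v s : S} : v ∈ hsetJ I c T s ↔ v ∈ T ∧ I.prio c v < I.prio c s :=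
  mem_filter

lemma hsetJ_subset {T : Finset S} {s : S} : hsetJ I c T s ⊆ T := filter_subset _ _

lemma mem_maxSet {T : Finset S} {k : ℕ} {s : S} :
    s ∈ I.maxSet c T k ↔ s ∈ T ∧ cntJ I c T s < k := mem_filter

lemma cnt_mono {T T' : Finset S} (h : T ⊆ T') (s : S) : cntJ I c T s ≤ cntJ I c T' s :=
  card_le_card (filter_subset_filter _ h)

lemma cnt_lt_cnt {T : Finset S} {v b : S} (hv : v ∈ T) (h : I.prio c v < I.prio c b) :
    cntJ I c T v < cntJ I c T b := by
  apply card_lt_card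
  constructor
  · exact fun x hx => by
      rw [mem_hsetJ] at hx ⊢; exact ⟨hx.1, hx.2.trans h⟩
  · intro hsub
    have : v ∈ hsetJ I c T v := hsub (by rw [mem_hsetJ]; exact ⟨hv, h⟩)
    rw [mem_hsetJ] at this
    exact lt_irrefl _ this.2

lemma cnt_inj {T : Finset S} {v w : S} (hv : v ∈ T) (hw : w ∈ T)
    (h : cntJ I c T v = cntJ I c T w) : v = w := by
  rcases lt_trichotomy (I.prio c v) (I.prio c w) with h1 | h1 | h1
  · exact absurd h (Nat.ne_of_lt (cnt_lt_cnt I c hv h1))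
  · exact I.prio_inj c h1
  · exact absurd h.symm (Nat.ne_of_lt (cnt_lt_cnt I c hw h1))

lemma card_maxSet (T : Finset S) (k : ℕ) : (I.maxSet c T k).card = min k T.card := by
  classical
  have hinj : Set.InjOn (cntJ I c T) T := fun v hv w hw h => cnt_inj I c hv hw h
  have himg : T.image (cntJ I c T) = Finset.range T.card := by
    apply Finset.eq_of_subset_of_card_le
    · intro x hx
      rw [Finset.mem_image] at hx
      obtain ⟨s, hs, rfl⟩ := hx
      rw [Finset.mem_range]
      calc cntJ I c T s = (hsetJ I c T s).card := rfl
        _ < T.card := by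
          apply card_lt_card
          constructor
          · exact hsetJ_subset I c
          · intro hsub
            have := hsub hs
            rw [mem_hsetJ] at this
            exact lt_irrefl _ this.2
    · rw [Finset.card_range, Finset.card_image_of_injOn hinj]
  have h1 : I.maxSet c T k = T.filter fun s => cntJ I c T s < k := rfl
  have h2 : (I.maxSet c T k).card = ((T.image (cntJ I c T)).filter (fun n => n < k)).card := by
    rw [h1, Finset.filter_image]
    rw [Finset.card_image_of_injOn (hinj.mono (Finset.filter_subset _ _))]
  rw [h2, himg]
  have : (Finset.range T.card).filter (fun n => n < k) = Finset.range (min k T.card) := by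
    ext n; simp only [mem_filter, mem_range, Finset.mem_range, lt_min_iff]; omega
  rw [this, Finset.card_range]

lemma maxSet_subset {T : Finset S} {k : ℕ} : I.maxSet c T k ⊆ T := filter_subset _ _

lemma notin_maxSet {T : Finset S} {k : ℕ} {s : S} (hs : s ∈ T) :
    s ∉ I.maxSet c T k ↔ k ≤ cntJ I c T s := by
  rw [mem_maxSet]; simp only [hs, true_and, not_lt]

lemma maxSet_prio_lt {T : Finset S} {k : ℕ} {s t : S} (hs : s ∈ T) (hns : s ∉ I.maxSet c T k)
    (ht : t ∈ I.maxSet c T k) : I.prio c t < I.prio c s := by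
  rw [mem_maxSet] at ht
  rw [notin_maxSet I c hs] at hns
  rcases lt_trichotomy (I.prio c t) (I.prio c s) with h1 | h1 | h1
  · exact h1
  · have := I.prio_inj c h1; subst this; omega
  · have := cnt_lt_cnt I c hs h1; omega

lemma maxSet_irc {T T' : Finset S} {k : ℕ} (h1 : I.maxSet c T' k ⊆ T) (h2 : T ⊆ T') :
    I.maxSet c T k = I.maxSet c T' k := by
  apply Finset.Subset.antisymm
  · intro w hw
    rw [mem_maxSet] at hw ⊢
    refine ⟨h2 hw.1, ?_⟩
    by_contra hcon
    push_neg at hcon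
    have hdiff : ¬ (hsetJ I c T' w ⊆ hsetJ I c T w) := by
      intro hsub
      have := card_le_card hsub
      unfold cntJ at *
      omega
    rw [Finset.not_subset] at hdiff
    -- pick the minimum-prio element of T' \ T above w
    have hne : ((T' \ T).filter fun v => I.prio c v < I.prio c w).Nonempty := by
      obtain ⟨v, hv1, hv2⟩ := hdiff
      rw [mem_hsetJ] at hv1
      refine ⟨v, ?_⟩
      rw [mem_filter, mem_sdiff]
      refine ⟨⟨hv1.1, ?_⟩, hv1.2⟩
      intro hvT
      exact hv2 (by rw [mem_hsetJ]; exact ⟨hvT, hv1.2⟩)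
    obtain ⟨v₀, hv₀, hmin⟩ := Finset.exists_min_image _ (fun v => I.prio c v) hne
    rw [mem_filter, mem_sdiff] at hv₀
    have hv₀T' : v₀ ∈ T' := hv₀.1.1
    have hv₀nT : v₀ ∉ T := hv₀.1.2
    have hv₀cnt : k ≤ cntJ I c T' v₀ := by
      rw [← notin_maxSet I c hv₀T']
      intro hmem
      exact hv₀nT (h1 hmem)
    -- every element of hsetJ T' v₀ is in T
    have hsub : hsetJ I c T' v₀ ⊆ hsetJ I c T w := by
      intro x hx
      rw [mem_hsetJ] at hx ⊢
      have hxw : I.prio c x < I.prio c w := hx.2.trans hv₀.2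
      refine ⟨?_, hxw⟩
      by_contra hxT
      have hxmem : x ∈ (T' \ T).filter fun v => I.prio c v < I.prio c w := by
        rw [mem_filter, mem_sdiff]; exact ⟨⟨hx.1, hxT⟩, hxw⟩
      have := hmin x hxmem
      omega
    have := card_le_card hsub
    unfold cntJ at *
    omega
  · intro w hw
    have hw' := hw
    rw [mem_maxSet] at hw'
    rw [mem_maxSet]
    exact ⟨h1 hw, lt_of_le_of_lt (cnt_mono I c h2 w) hw'.2⟩

end Aux
section Aux2

variable (I : SchoolChoice S C) (c : C)

def poolJ (T : Finset S) : Finset S := (T ∩ I.dis) \ I.jsaGen c T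

lemma jsaRes_def (T : Finset S) : I.jsaRes c T = I.maxSet c (poolJ I c T) (I.qR c) := rfl

lemma jsaGen_def (T : Finset S) : I.jsaGen c T = I.maxSet c T (I.q c - I.qR c) := rfl

lemma pool_subset {T : Finset S} : poolJ I c T ⊆ T :=
  fun x hx => (Finset.mem_inter.1 (Finset.mem_sdiff.1 hx).1).1

lemma pool_dis {T : Finset S} : poolJ I c T ⊆ I.dis :=
  fun x hx => (Finset.mem_inter.1 (Finset.mem_sdiff.1 hx).1).2

lemma mem_pool {T : Finset S} {x : S} :
    x ∈ poolJ I c T ↔ (x ∈ T ∧ x ∈ I.dis) ∧ x ∉ I.jsaGen c T := by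
  rw [poolJ, Finset.mem_sdiff, Finset.mem_inter]

lemma pool_mono {T T' : Finset S} (h : T ⊆ T') : poolJ I c T ⊆ poolJ I c T' := by
  intro w hw
  rw [mem_pool] at hw ⊢
  refine ⟨⟨h hw.1.1, hw.1.2⟩, ?_⟩
  rw [jsaGen_def, notin_maxSet I c (h hw.1.1)]
  have h1 : I.q c - I.qR c ≤ cntJ I c T w := by
    rw [← notin_maxSet I c hw.1.1]; exact hw.2
  exact h1.trans (cnt_mono I c h w)

lemma notin_CJSA {T : Finset S} {s : S} :
    s ∉ I.CJSA c T ↔ s ∉ I.jsaGen c T ∧ s ∉ I.jsaRes c T ∧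
      s ∉ I.maxSet c (T \ (I.jsaGen c T ∪ I.jsaRes c T))
        (I.q c - (I.jsaGen c T ∪ I.jsaRes c T).card) := by
  rw [CJSA]
  simp only [Finset.mem_union]
  tauto

lemma gen_subset_hset {T : Finset S} {s : S} (hs : s ∈ T)
    (hg : I.q c - I.qR c ≤ cntJ I c T s) : I.jsaGen c T ⊆ hsetJ I c T s := by
  intro w hw
  have hns : s ∉ I.jsaGen c T := by rw [jsaGen_def, notin_maxSet I c hs]; exact hg
  have := maxSet_prio_lt I c hs hns hw
  rw [mem_hsetJ]
  exact ⟨maxSet_subset I c hw, this⟩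

lemma hsetJ_sdiff {T X : Finset S} {s : S} :
    hsetJ I c (T \ X) s = hsetJ I c T s \ X := by
  ext x
  simp only [mem_hsetJ, Finset.mem_sdiff]
  tauto

lemma gen_res_disjoint {T : Finset S} : Disjoint (I.jsaGen c T) (I.jsaRes c T) := by
  rw [Finset.disjoint_left]
  intro a haG haR
  rw [jsaRes_def] at haR
  have h2 : a ∈ poolJ I c T := maxSet_subset I c haR
  rw [mem_pool] at h2
  exact h2.2 haG

lemma card_gen_of_ge {T : Finset S} {s : S} (hs : s ∈ T)
    (hg : I.q c - I.qR c ≤ cntJ I c T s) :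
    (I.jsaGen c T).card = I.q c - I.qR c := by
  rw [jsaGen_def, card_maxSet]
  apply min_eq_left
  calc I.q c - I.qR c ≤ cntJ I c T s := hg
    _ ≤ T.card := card_le_card (hsetJ_subset I c)

lemma card_res_of_ge {T : Finset S} {s : S}
    (hres : I.qR c ≤ cntJ I c (poolJ I c T) s) :
    (I.jsaRes c T).card = I.qR c := by
  rw [jsaRes_def, card_maxSet]
  apply min_eq_left
  calc I.qR c ≤ cntJ I c (poolJ I c T) s := hres
    _ ≤ (poolJ I c T).card := card_le_card (hsetJ_subset I c)

/-- characterization of rejection for disadvantaged students -/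
lemma char_dis {T : Finset S} {s : S} (hsT : s ∈ T) (hsd : s ∈ I.dis) :
    s ∉ I.CJSA c T ↔
      I.q c - I.qR c ≤ cntJ I c T s ∧ I.qR c ≤ cntJ I c (poolJ I c T) s := by
  constructor
  · intro h
    rw [notin_CJSA] at h
    obtain ⟨hG, hR, -⟩ := h
    have h1 : I.q c - I.qR c ≤ cntJ I c T s := by
      rw [← notin_maxSet I c hsT]; exact hG
    have hpool : s ∈ poolJ I c T := by rw [mem_pool]; exact ⟨⟨hsT, hsd⟩, hG⟩
    refine ⟨h1, ?_⟩
    rw [← notin_maxSet I c hpool]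
    exact hR
  · rintro ⟨h1, h2⟩
    rw [notin_CJSA]
    have hG : s ∉ I.jsaGen c T := by rw [jsaGen_def, notin_maxSet I c hsT]; exact h1
    have hpool : s ∈ poolJ I c T := by rw [mem_pool]; exact ⟨⟨hsT, hsd⟩, hG⟩
    have hR : s ∉ I.jsaRes c T := by rw [jsaRes_def, notin_maxSet I c hpool]; exact h2
    refine ⟨hG, hR, ?_⟩
    have hcardU : (I.jsaGen c T ∪ I.jsaRes c T).card = I.q c := by
      rw [Finset.card_union_of_disjoint (gen_res_disjoint I c),
        card_gen_of_ge I c hsT h1, card_res_of_ge I c h2]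
      have := I.qR_le c
      omega
    intro hmem
    rw [mem_maxSet, hcardU] at hmem
    omega

/-- the count identity for the third stage -/
lemma third_count {T : Finset S} {s : S} (hsT : s ∈ T)
    (hg : I.q c - I.qR c ≤ cntJ I c T s) :
    (I.q c - (I.jsaGen c T ∪ I.jsaRes c T).card ≤
        cntJ I c (T \ (I.jsaGen c T ∪ I.jsaRes c T)) s) ↔
      I.q c ≤ (hsetJ I c T s ∪ I.jsaRes c T).card := by
  set G := I.jsaGen c T with hGdef
  set R := I.jsaRes c T with hRdef
  set A := hsetJ I c T s with hAdef
  have hGA : G ⊆ A := gen_subset_hset I c hsT hg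
  have hGR : Disjoint G R := gen_res_disjoint I c
  have hcardG : G.card = I.q c - I.qR c := card_gen_of_ge I c hsT hg
  have hcardRle : R.card ≤ I.qR c := by
    rw [hRdef, jsaRes_def, card_maxSet]; exact min_le_left _ _
  -- |A ∩ (G ∪ R)| = |G| + |A ∩ R|
  have hAGR : A ∩ (G ∪ R) = G ∪ (A ∩ R) := by
    rw [Finset.inter_union_distrib_left, Finset.inter_eq_right.2 hGA]
  have hAGRcard : (A ∩ (G ∪ R)).card = G.card + (A ∩ R).card := by
    rw [hAGR]
    apply Finset.card_union_of_disjoint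
    exact hGR.mono_right Finset.inter_subset_right
  have e1 : (A ∩ (G ∪ R)).card + (A \ (G ∪ R)).card = A.card :=
    Finset.card_inter_add_card_sdiff A (G ∪ R)
  have e2 : (A ∩ R).card + (A \ R).card = A.card := Finset.card_inter_add_card_sdiff A R
  have e3 : (A ∪ R).card + (A ∩ R).card = A.card + R.card := by
    rw [Finset.card_union_add_card_inter]
  have e4 : (G ∪ R).card = G.card + R.card := Finset.card_union_of_disjoint hGR
  have e5 : cntJ I c (T \ (G ∪ R)) s = (A \ (G ∪ R)).card := by
    rw [cntJ, hsetJ_sdiff]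
  have hq := I.qR_le c
  rw [e5, e4]
  omega
end Aux2

section Aux3

variable (I : SchoolChoice S C) (c : C)

lemma mem_gen_iff {T : Finset S} {y : S} :
    y ∈ I.jsaGen c T ↔ y ∈ T ∧ cntJ I c T y < I.q c - I.qR c := by
  rw [jsaGen_def, mem_maxSet]

lemma notin_gen_iff {T : Finset S} {y : S} (hy : y ∈ T) :
    y ∉ I.jsaGen c T ↔ I.q c - I.qR c ≤ cntJ I c T y := by
  rw [jsaGen_def, notin_maxSet I c hy]

lemma mem_res_iff {T : Finset S} {y : S} :
    y ∈ I.jsaRes c T ↔ y ∈ poolJ I c T ∧ cntJ I c (poolJ I c T) y < I.qR c := by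
  rw [jsaRes_def, mem_maxSet]

lemma notin_res_iff {T : Finset S} {y : S} (hy : y ∈ poolJ I c T) :
    y ∉ I.jsaRes c T ↔ I.qR c ≤ cntJ I c (poolJ I c T) y := by
  rw [jsaRes_def, notin_maxSet I c hy]

lemma cnt_insert_le (y : S) (P : Finset S) (w : S) :
    cntJ I c (insert y P) w ≤ cntJ I c P w + 1 := by
  unfold cntJ hsetJ
  rw [Finset.filter_insert]
  split
  · exact Finset.card_insert_le _ _
  · exact Nat.le_succ _

lemma cnt_insert_of_not_lt {y : S} (P : Finset S) {w : S}
    (h : ¬ I.prio c y < I.prio c w) : cntJ I c (insert y P) w = cntJ I c P w := by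
  unfold cntJ hsetJ
  rw [Finset.filter_insert, if_neg h]

/-- characterization of rejection for advantaged students -/
lemma char_adv {T : Finset S} {s : S} (hsT : s ∈ T) (hsd : s ∉ I.dis) :
    s ∉ I.CJSA c T ↔
      I.q c - I.qR c ≤ cntJ I c T s ∧
        I.q c ≤ (hsetJ I c T s ∪ I.jsaRes c T).card := by
  have hsR : s ∉ I.jsaRes c T := by
    intro h
    exact hsd (pool_dis I c (mem_res_iff I c |>.1 h).1)
  constructor
  · intro h
    rw [notin_CJSA] at h
    obtain ⟨hG, -, hT3⟩ := h
    have h1 : I.q c - I.qR c ≤ cntJ I c T s := (notin_gen_iff I c hsT).1 hG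
    refine ⟨h1, ?_⟩
    rw [← third_count I c hsT h1]
    have hsB : s ∈ T \ (I.jsaGen c T ∪ I.jsaRes c T) := by
      rw [Finset.mem_sdiff, Finset.mem_union]
      exact ⟨hsT, by tauto⟩
    rw [← notin_maxSet I c hsB]
    exact hT3
  · rintro ⟨h1, h2⟩
    rw [notin_CJSA]
    have hG : s ∉ I.jsaGen c T := (notin_gen_iff I c hsT).2 h1
    refine ⟨hG, hsR, ?_⟩
    have hsB : s ∈ T \ (I.jsaGen c T ∪ I.jsaRes c T) := by
      rw [Finset.mem_sdiff, Finset.mem_union]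
      exact ⟨hsT, by tauto⟩
    rw [notin_maxSet I c hsB, third_count I c hsT h1]
    exact h2

lemma unionRes_insert {W : Finset S} {s v : S} (hs : s ∈ W) (hv : v ∉ W)
    (hg : I.q c - I.qR c ≤ cntJ I c W s) :
    (hsetJ I c W s ∪ I.jsaRes c W).card ≤
      (hsetJ I c (insert v W) s ∪ I.jsaRes c (insert v W)).card := by
  set Wp := insert v W with hWp
  set P := poolJ I c W with hP
  set Pp := poolJ I c Wp with hPp
  have hPsub : P ⊆ Pp := pool_mono I c (Finset.subset_insert _ _)
  have hAsub : hsetJ I c W s ⊆ hsetJ I c Wp s :=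
    Finset.filter_subset_filter _ (Finset.subset_insert _ _)
  have hsWp : s ∈ Wp := Finset.mem_insert_of_mem hs
  have hgp : I.q c - I.qR c ≤ cntJ I c Wp s := hg.trans (cnt_mono I c (Finset.subset_insert _ _) s)
  have hnew : ∀ y ∈ Pp, y ∉ P →
      y = v ∨ (y ∈ W ∧ cntJ I c W y + 1 = I.q c - I.qR c ∧ v ∈ I.jsaGen c Wp) := by
    intro y hyPp hyP
    have hy1 := (mem_pool I c).1 hyPp
    rcases Finset.mem_insert.1 hy1.1.1 with rfl | hyW
    · left; rfl
    right
    have hyG : y ∈ I.jsaGen c W := by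
      by_contra hcon
      exact hyP ((mem_pool I c).2 ⟨⟨hyW, hy1.1.2⟩, hcon⟩)
    have hc1 : cntJ I c W y < I.q c - I.qR c := ((mem_gen_iff I c).1 hyG).2
    have hc2 : I.q c - I.qR c ≤ cntJ I c Wp y := (notin_gen_iff I c hy1.1.1).1 hy1.2
    have hc3 : cntJ I c Wp y ≤ cntJ I c W y + 1 := by
      have := cnt_insert_le I c v W y
      rw [← hWp] at this
      exact this
    have hprio : I.prio c v < I.prio c y := by
      by_contra hcon
      have h9 := cnt_insert_of_not_lt I c (w := y) W hcon
      rw [← hWp] at h9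
      omega
    have hvG : v ∈ I.jsaGen c Wp := by
      rw [mem_gen_iff]
      have h6 := cnt_lt_cnt I c (T := Wp) (Finset.mem_insert_self v W) hprio
      exact ⟨Finset.mem_insert_self _ _, by omega⟩
    exact ⟨hyW, by omega, hvG⟩
  by_cases hloss : I.jsaRes c W ⊆ I.jsaRes c Wp
  · exact Finset.card_le_card (Finset.union_subset_union hAsub hloss)
  rw [Finset.not_subset] at hloss
  obtain ⟨w₀, hw₀R, hw₀n⟩ := hloss
  have hw₀P : w₀ ∈ P := ((mem_res_iff I c).1 hw₀R).1
  have hw₀Pp : w₀ ∈ Pp := hPsub hw₀P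
  have hc1 : cntJ I c P w₀ < I.qR c := ((mem_res_iff I c).1 hw₀R).2
  have hc2 : I.qR c ≤ cntJ I c Pp w₀ := (notin_res_iff I c hw₀Pp).1 hw₀n
  have hyex : ∃ y, y ∈ hsetJ I c Pp w₀ ∧ y ∉ hsetJ I c P w₀ := by
    by_contra hcon
    push_neg at hcon
    have hsub : hsetJ I c Pp w₀ ⊆ hsetJ I c P w₀ := fun x hx => hcon x hx
    have := Finset.card_le_card hsub
    unfold cntJ at hc1 hc2
    omega
  obtain ⟨y, hy1, hy2⟩ := hyex
  have hyPp : y ∈ Pp := ((mem_hsetJ I c).1 hy1).1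
  have hyprio : I.prio c y < I.prio c w₀ := ((mem_hsetJ I c).1 hy1).2
  have hyP : y ∉ P := fun h => hy2 ((mem_hsetJ I c).2 ⟨h, hyprio⟩)
  have huniq : ∀ x ∈ Pp, x ∉ P → x = y := by
    intro x hx1 hx2
    rcases hnew x hx1 hx2 with rfl | hx
    · rcases hnew y hyPp hyP with rfl | hy
      · rfl
      · exact absurd hy.2.2 ((mem_pool I c).1 hx1).2
    · rcases hnew y hyPp hyP with rfl | hy
      · exact absurd hx.2.2 ((mem_pool I c).1 hyPp).2
      · exact cnt_inj I c hx.1 hy.1 (by omega)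
  have hPsub2 : Pp ⊆ insert y P := by
    intro x hx
    by_cases hxP : x ∈ P
    · exact Finset.mem_insert_of_mem hxP
    · rw [huniq x hx hxP]; exact Finset.mem_insert_self _ _
  have hcntw₀ : cntJ I c Pp w₀ ≤ cntJ I c P w₀ + 1 :=
    (cnt_mono I c hPsub2 w₀).trans (cnt_insert_le I c y P w₀)
  have hlost : ∀ w' ∈ I.jsaRes c W, w' ∉ I.jsaRes c Wp → w' = w₀ := by
    intro w' hw' hw'n
    have hP' : w' ∈ P := ((mem_res_iff I c).1 hw').1
    have d1 : cntJ I c P w' < I.qR c := ((mem_res_iff I c).1 hw').2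
    have d2 : I.qR c ≤ cntJ I c Pp w' := (notin_res_iff I c (hPsub hP')).1 hw'n
    have d3 : cntJ I c Pp w' ≤ cntJ I c P w' + 1 :=
      (cnt_mono I c hPsub2 w').trans (cnt_insert_le I c y P w')
    exact cnt_inj I c hP' hw₀P (by omega)
  have hvmem : v ∈ hsetJ I c Wp s ∪ I.jsaRes c Wp := by
    rcases hnew y hyPp hyP with rfl | hy
    · apply Finset.mem_union_right
      rw [mem_res_iff, ← hPp]
      refine ⟨hyPp, ?_⟩
      have h6 := cnt_lt_cnt I c (T := Pp) hyPp hyprio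
      omega
    · exact Finset.mem_union_left _ (gen_subset_hset I c hsWp hgp hy.2.2)
  have hsub2 : insert v ((hsetJ I c W s ∪ I.jsaRes c W).erase w₀) ⊆
      hsetJ I c Wp s ∪ I.jsaRes c Wp := by
    intro x hx
    rcases Finset.mem_insert.1 hx with rfl | hx
    · exact hvmem
    · have hx1 := Finset.mem_of_mem_erase hx
      have hxne := Finset.ne_of_mem_erase hx
      rcases Finset.mem_union.1 hx1 with hxa | hxr
      · exact Finset.mem_union_left _ (hAsub hxa)
      · apply Finset.mem_union_right
        by_contra hcon
        exact hxne (hlost x hxr hcon)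
  have hvnot : v ∉ (hsetJ I c W s ∪ I.jsaRes c W).erase w₀ := by
    intro h
    rcases Finset.mem_union.1 (Finset.mem_of_mem_erase h) with h' | h'
    · exact hv (hsetJ_subset I c h')
    · exact hv (pool_subset I c ((mem_res_iff I c).1 h').1)
  have hw₀U : w₀ ∈ hsetJ I c W s ∪ I.jsaRes c W := Finset.mem_union_right _ hw₀R
  have h7 := Finset.card_le_card hsub2
  rw [Finset.card_insert_of_notMem hvnot, Finset.card_erase_of_mem hw₀U] at h7
  have h8 : 1 ≤ (hsetJ I c W s ∪ I.jsaRes c W).card :=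
    Finset.card_pos.2 ⟨w₀, hw₀U⟩
  omega

lemma unionRes_mono {T T' : Finset S} {s : S} (hs : s ∈ T)
    (hg : I.q c - I.qR c ≤ cntJ I c T s) (hsub : T ⊆ T') :
    (hsetJ I c T s ∪ I.jsaRes c T).card ≤ (hsetJ I c T' s ∪ I.jsaRes c T').card := by
  have key : ∀ n (T' : Finset S), T ⊆ T' → (T' \ T).card = n →
      (hsetJ I c T s ∪ I.jsaRes c T).card ≤ (hsetJ I c T' s ∪ I.jsaRes c T').card := by
    intro n
    induction n with
    | zero =>
      intro T' h1 h2
      have h3 : T' \ T = ∅ := Finset.card_eq_zero.1 h2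
      have : T' = T := by
        apply Finset.Subset.antisymm _ h1
        intro x hx
        by_contra hxT
        have hmem : x ∈ T' \ T := Finset.mem_sdiff.2 ⟨hx, hxT⟩
        rw [h3] at hmem
        exact Finset.notMem_empty x hmem
      rw [this]
    | succ n ih =>
      intro T' h1 h2
      have hne : (T' \ T).Nonempty := by
        rw [← Finset.card_pos, h2]; omega
      obtain ⟨v, hv⟩ := hne
      have hvT' : v ∈ T' := (Finset.mem_sdiff.1 hv).1
      have hvT : v ∉ T := (Finset.mem_sdiff.1 hv).2
      have hTsub : T ⊆ T'.erase v := fun x hx =>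
        Finset.mem_erase.2 ⟨fun h => hvT (h ▸ hx), h1 hx⟩
      have hcard : (T'.erase v \ T).card = n := by
        have heq : T'.erase v \ T = (T' \ T).erase v := by
          ext x
          simp only [Finset.mem_erase, Finset.mem_sdiff]
          tauto
        rw [heq, Finset.card_erase_of_mem hv, h2]
        omega
      have step1 := ih (T'.erase v) hTsub hcard
      have step2 := unionRes_insert I c (W := T'.erase v) (v := v) (hTsub hs)
        (Finset.notMem_erase v T') (hg.trans (cnt_mono I c hTsub s))
      rw [Finset.insert_erase hvT'] at step2
      exact step1.trans step2
  exact key (T' \ T).card T' hsub rfl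

/-- substitutability of C^JSA -/
lemma CJSA_subst {T T' : Finset S} {s : S} (hsub : T ⊆ T') (hsT : s ∈ T)
    (h : s ∉ I.CJSA c T) : s ∉ I.CJSA c T' := by
  by_cases hd : s ∈ I.dis
  · rw [char_dis I c hsT hd] at h
    rw [char_dis I c (hsub hsT) hd]
    exact ⟨h.1.trans (cnt_mono I c hsub s),
      h.2.trans (cnt_mono I c (pool_mono I c hsub) s)⟩
  · rw [char_adv I c hsT hd] at h
    rw [char_adv I c (hsub hsT) hd]
    exact ⟨h.1.trans (cnt_mono I c hsub s), h.2.trans (unionRes_mono I c hsT h.1 hsub)⟩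

lemma CJSA_subset {T : Finset S} : I.CJSA c T ⊆ T := by
  rw [CJSA]
  apply Finset.union_subset
  apply Finset.union_subset
  · exact maxSet_subset I c
  · intro x hx
    rw [jsaRes_def] at hx
    exact pool_subset I c (maxSet_subset I c hx)
  · intro x hx
    have := maxSet_subset I c hx
    exact (Finset.mem_sdiff.1 this).1

lemma card_CJSA_le {T : Finset S} : (I.CJSA c T).card ≤ I.q c := by
  rw [CJSA]
  have h1 : (I.jsaGen c T).card ≤ I.q c - I.qR c := by
    rw [jsaGen_def, card_maxSet]; exact min_le_left _ _
  have h2 : (I.jsaRes c T).card ≤ I.qR c := by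
    rw [jsaRes_def, card_maxSet]; exact min_le_left _ _
  have h3 : (I.jsaGen c T ∪ I.jsaRes c T).card ≤ I.q c := by
    have := Finset.card_union_le (I.jsaGen c T) (I.jsaRes c T)
    have hq := I.qR_le c
    omega
  have h4 : (I.maxSet c (T \ (I.jsaGen c T ∪ I.jsaRes c T))
      (I.q c - (I.jsaGen c T ∪ I.jsaRes c T).card)).card ≤
      I.q c - (I.jsaGen c T ∪ I.jsaRes c T).card := by
    rw [card_maxSet]; exact min_le_left _ _
  have h5 := Finset.card_union_le (I.jsaGen c T ∪ I.jsaRes c T)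
    (I.maxSet c (T \ (I.jsaGen c T ∪ I.jsaRes c T))
      (I.q c - (I.jsaGen c T ∪ I.jsaRes c T).card))
  omega

/-- irrelevance of rejected students (consistency) for C^JSA -/
lemma CJSA_irc {T T' : Finset S} (h1 : I.CJSA c T' ⊆ T) (h2 : T ⊆ T') :
    I.CJSA c T = I.CJSA c T' := by
  have hGsub : I.jsaGen c T' ⊆ I.CJSA c T' := by
    intro x hx
    rw [CJSA]
    exact Finset.mem_union_left _ (Finset.mem_union_left _ hx)
  have hRsub : I.jsaRes c T' ⊆ I.CJSA c T' := by
    intro x hx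
    rw [CJSA]
    exact Finset.mem_union_left _ (Finset.mem_union_right _ hx)
  have hG : I.jsaGen c T = I.jsaGen c T' := by
    rw [jsaGen_def, jsaGen_def]
    exact maxSet_irc I c (hGsub.trans h1) h2
  have hpoolsub : poolJ I c T ⊆ poolJ I c T' := pool_mono I c h2
  have hR : I.jsaRes c T = I.jsaRes c T' := by
    rw [jsaRes_def, jsaRes_def]
    apply maxSet_irc I c _ hpoolsub
    intro x hx
    have hx1 : x ∈ poolJ I c T' := maxSet_subset I c hx
    rw [mem_pool] at hx1 ⊢
    have hxT : x ∈ T := h1 (hRsub hx)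
    rw [hG]
    exact ⟨⟨hxT, hx1.1.2⟩, hx1.2⟩
  rw [CJSA, CJSA, hG, hR]
  congr 1
  apply maxSet_irc I c
  · intro x hx
    have hx1 := maxSet_subset I c hx
    rw [Finset.mem_sdiff] at hx1 ⊢
    have hxCJSA : x ∈ I.CJSA c T' := by
      rw [CJSA]
      exact Finset.mem_union_right _ hx
    exact ⟨h1 hxCJSA, hx1.2⟩
  · intro x hx
    rw [Finset.mem_sdiff] at hx ⊢
    exact ⟨h2 hx.1, hx.2⟩

end Aux3

section DA

lemma mem_assigned (I : SchoolChoice S C) {μ : S → Option C} {s : S} {c : C} :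
    s ∈ I.assigned μ c ↔ μ s = some c := by
  rw [assigned]
  simp

noncomputable def candsJ (I : SchoolChoice S C) (A : C → Finset S) (s : S) : Finset C :=
  @Finset.filter C (fun c => I.acceptable s c ∧ (s ∈ A c → s ∈ I.CJSA c (A c)))
    (Classical.decPred _) Finset.univ

noncomputable def nextJ (I : SchoolChoice S C) (A : C → Finset S) (s : S) : Option C :=
  if h : (candsJ I A s).Nonempty then
    some (Classical.choose
      (Finset.exists_min_image (candsJ I A s) (fun c => I.pref s (some c)) h))
  else none

noncomputable def stepJ (I : SchoolChoice S C) (A : C → Finset S) : C → Finset S :=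
  fun c => A c ∪ Finset.univ.filter fun s => nextJ I A s = some c

variable (I : SchoolChoice S C)

lemma mem_candsJ {A : C → Finset S} {s : S} {c : C} :
    c ∈ candsJ I A s ↔ I.acceptable s c ∧ (s ∈ A c → s ∈ I.CJSA c (A c)) := by
  simp [candsJ]

lemma nextJ_spec {A : C → Finset S} {s : S} {c : C} (h : nextJ I A s = some c) :
    c ∈ candsJ I A s ∧ ∀ c' ∈ candsJ I A s, I.pref s (some c) ≤ I.pref s (some c') := by
  rw [nextJ] at h
  split at h
  case isTrue hne =>
    have hspec := Classical.choose_spec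
      (Finset.exists_min_image (candsJ I A s) (fun c => I.pref s (some c)) hne)
    have hc : Classical.choose
        (Finset.exists_min_image (candsJ I A s) (fun c => I.pref s (some c)) hne) = c :=
      Option.some_injective _ h
    rw [hc] at hspec
    exact hspec
  case isFalse hne => exact absurd h (by simp)

lemma nextJ_of_mem {A : C → Finset S} {s : S} {c : C} (h : c ∈ candsJ I A s) :
    ∃ c₀, nextJ I A s = some c₀ ∧ I.pref s (some c₀) ≤ I.pref s (some c) := by
  have hne : (candsJ I A s).Nonempty := ⟨c, h⟩
  rw [nextJ, dif_pos hne]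
  exact ⟨_, rfl, (Classical.choose_spec
    (Finset.exists_min_image (candsJ I A s) (fun c => I.pref s (some c)) hne)).2 c h⟩

lemma subset_stepJ {A : C → Finset S} {c : C} : A c ⊆ stepJ I A c :=
  Finset.subset_union_left

lemma mem_stepJ {A : C → Finset S} {s : S} {c : C} :
    s ∈ stepJ I A c ↔ s ∈ A c ∨ nextJ I A s = some c := by
  rw [stepJ]
  simp

def GoodJ (I : SchoolChoice S C) (μB : S → Option C) (A : C → Finset S) : Prop :=
  (∀ c s, s ∈ A c → I.acceptable s c) ∧
  (∀ c s, s ∈ A c → ∀ c', I.acceptable s c' →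
    I.pref s (some c') < I.pref s (some c) → s ∈ A c' ∧ s ∉ I.CJSA c' (A c')) ∧
  (∀ s, s ∈ I.dis → ∀ c, μB s = some c → s ∈ A c → s ∈ I.CJSA c (A c))

lemma exists_res_witness (c : C) (μB : S → Option C) (hsmart : I.SmartReserve μB)
    {T : Finset S} {s : S} (hsT : s ∈ T) (hsd : s ∈ I.dis) (hrej : s ∉ I.CJSA c T)
    (hsB : s ∈ I.assigned μB c) :
    ∃ t, t ∈ T ∧ t ∈ I.dis ∧ I.prio c t < I.prio c s ∧ t ∉ I.assigned μB c := by
  have hchar := (char_dis I c hsT hsd).1 hrej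
  have hpool : s ∈ poolJ I c T :=
    (mem_pool I c).2 ⟨⟨hsT, hsd⟩, (notin_gen_iff I c hsT).2 hchar.1⟩
  have hsR : s ∉ I.jsaRes c T := (notin_res_iff I c hpool).2 hchar.2
  have hcardR : (I.jsaRes c T).card = I.qR c := card_res_of_ge I c hchar.2
  have hnotsub : ¬ I.jsaRes c T ⊆ I.assigned μB c ∩ I.dis := by
    intro hsub
    have hsub2 : insert s (I.jsaRes c T) ⊆ I.assigned μB c ∩ I.dis :=
      Finset.insert_subset_iff.2 ⟨Finset.mem_inter.2 ⟨hsB, hsd⟩, hsub⟩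
    have h1 := Finset.card_le_card hsub2
    rw [Finset.card_insert_of_notMem hsR, hcardR] at h1
    have h2 := hsmart c
    omega
  rw [Finset.not_subset] at hnotsub
  obtain ⟨t, htR, htn⟩ := hnotsub
  have htpool : t ∈ poolJ I c T := ((mem_res_iff I c).1 htR).1
  have htdis : t ∈ I.dis := pool_dis I c htpool
  refine ⟨t, pool_subset I c htpool, htdis, ?_,
    fun hmem => htn (Finset.mem_inter.2 ⟨hmem, htdis⟩)⟩
  rw [jsaRes_def] at hsR htR
  exact maxSet_prio_lt I c hpool hsR htR

lemma goodJ_step (μB : S → Option C) (hBs : I.IsStable I.CBASE μB)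
    (hsmart : I.SmartReserve μB) {A : C → Finset S} (hA : GoodJ I μB A) :
    GoodJ I μB (stepJ I A) := by
  obtain ⟨hA1, hA2, hA3⟩ := hA
  have g1 : ∀ c s, s ∈ stepJ I A c → I.acceptable s c := by
    intro c s hs
    rcases (mem_stepJ I).1 hs with h | h
    · exact hA1 c s h
    · exact ((mem_candsJ I).1 (nextJ_spec I h).1).1
  have gkey : ∀ c s, s ∈ stepJ I A c → ∀ c', I.acceptable s c' →
      I.pref s (some c') < I.pref s (some c) → s ∈ A c' ∧ s ∉ I.CJSA c' (A c') := by
    intro c s hs c' hacc' hlt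
    rcases (mem_stepJ I).1 hs with h | h
    · exact hA2 c s h c' hacc' hlt
    · obtain ⟨hcmem, hmin⟩ := nextJ_spec I h
      have hc' : c' ∉ candsJ I A s := by
        intro hmem
        have := hmin c' hmem
        omega
      by_contra hcon
      apply hc'
      rw [mem_candsJ]
      refine ⟨hacc', fun hmem => ?_⟩
      by_contra hrej2
      exact hcon ⟨hmem, hrej2⟩
  have g2 : ∀ c s, s ∈ stepJ I A c → ∀ c', I.acceptable s c' →
      I.pref s (some c') < I.pref s (some c) →
      s ∈ stepJ I A c' ∧ s ∉ I.CJSA c' (stepJ I A c') := by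
    intro c s hs c' hacc' hlt
    have hkey := gkey c s hs c' hacc' hlt
    exact ⟨subset_stepJ I hkey.1, CJSA_subst I c' (subset_stepJ I) hkey.1 hkey.2⟩
  refine ⟨g1, g2, ?_⟩
  intro s hsd c hμB hsT
  by_contra hrej
  have hsB : s ∈ I.assigned μB c := by rw [mem_assigned]; exact hμB
  obtain ⟨t, htT, htd, htprio, htnB⟩ :=
    exists_res_witness I c μB hsmart hsT hsd hrej hsB
  have hacc_tc : I.acceptable t c := g1 c t htT
  have htBne : μB t ≠ some c := fun h => htnB (by rw [mem_assigned]; exact h)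
  rcases Nat.lt_trichotomy (I.pref t (some c)) (I.pref t (μB t)) with hlt | heq | hgt
  · apply hBs.2 t c hacc_tc hlt
    rw [CBASE, mem_maxSet]
    refine ⟨Finset.mem_insert_self _ _, ?_⟩
    have hsub : hsetJ I c (insert t (I.assigned μB c)) t ⊆ (I.assigned μB c).erase s := by
      intro x hx
      rw [mem_hsetJ] at hx
      have hxt : x ≠ t := by rintro rfl; exact lt_irrefl _ hx.2
      have hxs : x ≠ s := by
        rintro rfl
        exact lt_irrefl _ (hx.2.trans htprio)
      rcases Finset.mem_insert.1 hx.1 with h | h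
      · exact absurd h hxt
      · exact Finset.mem_erase.2 ⟨hxs, h⟩
    have h1 : cntJ I c (insert t (I.assigned μB c)) t ≤ ((I.assigned μB c).erase s).card :=
      Finset.card_le_card hsub
    rw [Finset.card_erase_of_mem hsB] at h1
    have h2 : (I.assigned μB c).card ≤ I.q c := hBs.1.2 c
    have h3 : 1 ≤ (I.assigned μB c).card := Finset.card_pos.2 ⟨s, hsB⟩
    omega
  · exact htBne (I.pref_inj t heq).symm
  · cases hμBt : μB t with
    | none =>
      rw [hμBt] at hgt
      have h5 : I.pref t (some c) < I.pref t none := hacc_tc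
      omega
    | some c'' =>
      have hacc'' : I.acceptable t c'' := hBs.1.1 t c'' hμBt
      rw [hμBt] at hgt
      have hkey := gkey c t htT c'' hacc'' hgt
      exact hkey.2 (hA3 t htd c'' hμBt hkey.1)

lemma stepJ_measure {A : C → Finset S} (h : stepJ I A ≠ A) :
    (∑ c, (A c).card) < ∑ c, (stepJ I A c).card := by
  have hex : ∃ c, A c ≠ stepJ I A c := by
    by_contra hcon
    push_neg at hcon
    exact h (funext fun c => (hcon c).symm)
  obtain ⟨c₀, hc₀⟩ := hex
  apply Finset.sum_lt_sum
  · intro i _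
    exact Finset.card_le_card (subset_stepJ I)
  · exact ⟨c₀, Finset.mem_univ _,
      Finset.card_lt_card (Finset.ssubset_iff_subset_ne.2 ⟨subset_stepJ I, hc₀⟩)⟩

end DA

section DA2

noncomputable def muStar (I : SchoolChoice S C) (A : C → Finset S) : S → Option C :=
  fun s => nextJ I A s

variable (I : SchoolChoice S C)

lemma muStar_assigned {A : C → Finset S} (hfix : stepJ I A = A)
    (hG1 : ∀ c s, s ∈ A c → I.acceptable s c)
    (hG2 : ∀ c s, s ∈ A c → ∀ c', I.acceptable s c' →
      I.pref s (some c') < I.pref s (some c) → s ∈ A c' ∧ s ∉ I.CJSA c' (A c')) :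
    ∀ c, I.assigned (muStar I A) c = I.CJSA c (A c) := by
  intro c
  ext u
  rw [mem_assigned]
  constructor
  · intro h
    have h' : nextJ I A u = some c := h
    have hc := (mem_candsJ I).1 (nextJ_spec I h').1
    have humem : u ∈ A c := by
      have h2 : u ∈ stepJ I A c := (mem_stepJ I).2 (Or.inr h')
      rw [hfix] at h2
      exact h2
    exact hc.2 humem
  · intro hin
    have hsA : u ∈ A c := CJSA_subset I c hin
    have hcmem : c ∈ candsJ I A u := (mem_candsJ I).2 ⟨hG1 c u hsA, fun _ => hin⟩
    obtain ⟨c₀, hc₀, hle⟩ := nextJ_of_mem I hcmem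
    have hc₀mem := (nextJ_spec I hc₀).1
    rcases Nat.lt_trichotomy (I.pref u (some c₀)) (I.pref u (some c)) with hlt | heq | hgt
    · have hkey := hG2 c u hsA c₀ ((mem_candsJ I).1 hc₀mem).1 hlt
      have h3 := ((mem_candsJ I).1 hc₀mem).2 hkey.1
      exact absurd h3 hkey.2
    · have h4 : (some c₀ : Option C) = some c := I.pref_inj u heq
      show nextJ I A u = some c
      rw [hc₀, h4]
    · omega

lemma muStar_stable {A : C → Finset S} (hfix : stepJ I A = A)
    (hG1 : ∀ c s, s ∈ A c → I.acceptable s c)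
    (hG2 : ∀ c s, s ∈ A c → ∀ c', I.acceptable s c' →
      I.pref s (some c') < I.pref s (some c) → s ∈ A c' ∧ s ∉ I.CJSA c' (A c')) :
    I.IsStable I.CJSA (muStar I A) := by
  have hassigned := muStar_assigned I hfix hG1 hG2
  constructor
  · constructor
    · intro s c h
      have h' : nextJ I A s = some c := h
      exact ((mem_candsJ I).1 (nextJ_spec I h').1).1
    · intro c
      rw [hassigned c]
      exact card_CJSA_le I c
  · intro u c hacc hlt
    by_cases huA : u ∈ A c
    · have hurej : u ∉ I.CJSA c (A c) := by
        intro hin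
        have h5 : u ∈ I.assigned (muStar I A) c := by rw [hassigned c]; exact hin
        rw [mem_assigned] at h5
        rw [h5] at hlt
        exact lt_irrefl _ hlt
      have h1 : I.CJSA c (A c) ⊆ insert u (I.assigned (muStar I A) c) := by
        rw [hassigned c]
        exact Finset.subset_insert _ _
      have h2 : insert u (I.assigned (muStar I A) c) ⊆ A c := by
        apply Finset.insert_subset_iff.2
        refine ⟨huA, ?_⟩
        rw [hassigned c]
        exact CJSA_subset I c
      have hirc := CJSA_irc I c h1 h2
      rw [hirc]
      exact hurej
    · exfalso
      have hcmem : c ∈ candsJ I A u := (mem_candsJ I).2 ⟨hacc, fun h => absurd h huA⟩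
      obtain ⟨c₀, hc₀, hle⟩ := nextJ_of_mem I hcmem
      have h6 : muStar I A u = some c₀ := hc₀
      rw [h6] at hlt
      omega

lemma muStar_dom (μB : S → Option C) {A : C → Finset S}
    (hG3 : ∀ s, s ∈ I.dis → ∀ c, μB s = some c → s ∈ A c → s ∈ I.CJSA c (A c))
    (hBacc : ∀ s c, μB s = some c → I.acceptable s c) :
    ∀ s ∈ I.dis, I.pref s (muStar I A s) ≤ I.pref s (μB s) := by
  intro s hs
  cases hμ : μB s with
  | none =>
    cases hν : muStar I A s with
    | none => exact le_refl _
    | some c =>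
      have h' : nextJ I A s = some c := hν
      have hacc := ((mem_candsJ I).1 (nextJ_spec I h').1).1
      exact le_of_lt hacc
  | some c =>
    have hcmem : c ∈ candsJ I A s :=
      (mem_candsJ I).2 ⟨hBacc s c hμ, fun hmem => hG3 s hs c hμ hmem⟩
    obtain ⟨c₀, hc₀, hle⟩ := nextJ_of_mem I hcmem
    have h7 : muStar I A s = some c₀ := hc₀
    rw [h7]
    exact hle

lemma main_aux (μB μJ : S → Option C)
    (hB : I.IsOptStable I.CBASE μB) (hJ : I.IsOptStable I.CJSA μJ)
    (hsmart : I.SmartReserve μB) :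
    ∀ s ∈ I.dis, I.pref s (μJ s) ≤ I.pref s (μB s) := by
  classical
  have hgrow : ∀ n : ℕ,
      (∀ k, k < n → stepJ I ((stepJ I)^[k] (fun _ => (∅ : Finset S))) ≠
        (stepJ I)^[k] (fun _ => (∅ : Finset S))) →
      n ≤ ∑ c, (((stepJ I)^[n] (fun _ => (∅ : Finset S))) c).card := by
    intro n
    induction n with
    | zero => intro _; exact Nat.zero_le _
    | succ n ih =>
      intro h
      have h1 := ih (fun k hk => h k (Nat.lt_succ_of_lt hk))
      have h2 := stepJ_measure I (h n (Nat.lt_succ_self n))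
      rw [Function.iterate_succ_apply']
      omega
  have hfixex : ∃ n, stepJ I ((stepJ I)^[n] (fun _ => (∅ : Finset S))) =
      (stepJ I)^[n] (fun _ => (∅ : Finset S)) := by
    by_contra hcon
    push_neg at hcon
    have h1 := hgrow (Fintype.card C * Fintype.card S + 1) (fun k _ => hcon k)
    have h2 : (∑ c, (((stepJ I)^[Fintype.card C * Fintype.card S + 1]
        (fun _ => (∅ : Finset S))) c).card) ≤ Fintype.card C * Fintype.card S := by
      calc (∑ c, (((stepJ I)^[Fintype.card C * Fintype.card S + 1]
          (fun _ => (∅ : Finset S))) c).card)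
          ≤ ∑ _c : C, Fintype.card S :=
            Finset.sum_le_sum (fun i _ =>
              (Finset.card_le_univ _).trans (le_of_eq Finset.card_univ))
        _ = Fintype.card C * Fintype.card S := by
            rw [Finset.sum_const, Finset.card_univ, smul_eq_mul]
    omega
  obtain ⟨N, hfix⟩ := hfixex
  have hGoodIter : ∀ n, GoodJ I μB ((stepJ I)^[n] (fun _ => (∅ : Finset S))) := by
    intro n
    induction n with
    | zero =>
      exact ⟨fun c s hs => absurd hs (Finset.notMem_empty s),
        fun c s hs => absurd hs (Finset.notMem_empty s),
        fun s _ c _ hs => absurd hs (Finset.notMem_empty s)⟩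
    | succ n ih =>
      rw [Function.iterate_succ_apply']
      exact goodJ_step I μB hB.1 hsmart ih
  have hGood := hGoodIter N
  revert hfix hGood
  generalize (stepJ I)^[N] (fun _ => (∅ : Finset S)) = A
  intro hfix hGood
  obtain ⟨hG1, hG2, hG3⟩ := hGood
  intro s hs
  have hstable := muStar_stable I hfix hG1 hG2
  have hdom := muStar_dom I μB hG3 hB.1.1.1 s hs
  exact (hJ.2 (muStar I A) hstable s).trans hdom

end DA2

end SchoolChoice
/-- under a smart reserve, μ^JSA weakly dominates μ^BASE for
disadvantaged students. -/
theorem JSA_smart_dominates_BASE {S C : Type*} [Fintype S] [DecidableEq S] [Fintype C] [DecidableEq C]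
    (I : SchoolChoice S C) (μB μJ : S → Option C)
    (hB : I.IsOptStable I.CBASE μB) (hJ : I.IsOptStable I.CJSA μJ)
    (hsmart : I.SmartReserve μB) :
    ∀ s ∈ I.dis, I.pref s (μJ s) ≤ I.pref s (μB s) :=
  I.main_aux μB μJ hB hJ hsmart
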